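/- Let α∈(0,2) and κ∈ℝ with ακ > −1 and κ < 1 − 1/α, and let t∈ℝ, t≠0. Then ∫₀^∞ u^{κα} · |ln|t+u| − ln u|^α du < ∞. -/

import Mathlib

open MeasureTheory Real Set
open scoped ENNReal NNReal

lemma aux_abs_log_le {ε x : ℝ} (hε : 0 < ε) (hx : 0 ≤ x) :
    |Real.log x| ≤ (x ^ ε + x ^ (-ε)) / ε := by
  rcases hx.eq_or_lt with h0 | hx0
  · simp [← h0, Real.log_zero, Real.zero_rpow hε.ne', Real.zero_rpow (neg_ne_zero.mpr hε.ne')]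
  · have hxε : (0:ℝ) ≤ x ^ ε := Real.rpow_nonneg hx ε
    have hxε' : (0:ℝ) ≤ x ^ (-ε) := Real.rpow_nonneg hx _
    have h1 : Real.log x ≤ x ^ ε / ε := Real.log_le_rpow_div hx hε
    have h2 : -Real.log x ≤ x ^ (-ε) / ε := by
      have h := Real.log_le_rpow_div (inv_nonneg.mpr hx) hε
      rwa [Real.log_inv, Real.inv_rpow hx, ← Real.rpow_neg hx] at h
    rw [abs_le]
    constructor
    · have : (0:ℝ) ≤ x ^ ε / ε := by positivity
      rw [add_div]; linarith
    · have : (0:ℝ) ≤ x ^ (-ε) / ε := by positivity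
      rw [add_div]; linarith

lemma aux_abs_log_le_two_mul {x : ℝ} (hx : 1/2 ≤ x) : |Real.log x| ≤ 2 * |x - 1| := by
  have hx0 : (0:ℝ) < x := by linarith
  rcases le_or_gt 1 x with h1 | h1
  · rw [abs_of_nonneg (Real.log_nonneg h1), abs_of_nonneg (by linarith)]
    have := Real.log_le_sub_one_of_pos hx0
    linarith
  · rw [abs_of_nonpos (Real.log_nonpos hx0.le h1.le), abs_of_neg (by linarith)]
    have h := Real.log_le_sub_one_of_pos (inv_pos.mpr hx0)
    rw [Real.log_inv] at h
    have key : (2 * (1 - x)) - (x⁻¹ - 1) = (2*x - 1) * (1 - x) / x := by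
      field_simp
    have hnn : (0:ℝ) ≤ (2*x - 1) * (1 - x) / x :=
      div_nonneg (mul_nonneg (by linarith) (by linarith)) hx0.le
    linarith

lemma aux_add_rpow_le {a b p : ℝ} (ha : 0 ≤ a) (hb : 0 ≤ b) (hp : 0 ≤ p) :
    (a + b) ^ p ≤ 2 ^ p * (a ^ p + b ^ p) := by
  have h1 : a + b ≤ 2 * max a b := by
    rcases le_total a b with h | h
    · rw [max_eq_right h]; linarith
    · rw [max_eq_left h]; linarith
  calc (a + b) ^ p ≤ (2 * max a b) ^ p :=
        Real.rpow_le_rpow (by linarith) h1 hp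
    _ = 2 ^ p * (max a b) ^ p :=
        Real.mul_rpow (by norm_num) (le_max_iff.mpr (Or.inl ha))
    _ ≤ 2 ^ p * (a ^ p + b ^ p) := by
        apply mul_le_mul_of_nonneg_left _ (Real.rpow_nonneg (by norm_num) p)
        rcases le_total a b with h | h
        · rw [max_eq_right h]
          have := Real.rpow_nonneg ha p; linarith
        · rw [max_eq_left h]
          have := Real.rpow_nonneg hb p; linarith

lemma aux_integrableOn_abs_rpow {r : ℝ} (hr : -1 < r) (c d : ℝ) :
    IntegrableOn (fun v : ℝ => |v| ^ r) (Icc c d) := by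
  set R := |c| + |d| with hR
  have hR0 : (0:ℝ) ≤ R := by positivity
  have hpos : IntegrableOn (fun v : ℝ => |v| ^ r) (Icc 0 R) := by
    have h1 : IntegrableOn (fun v : ℝ => v ^ r) (Icc 0 R) :=
      (intervalIntegrable_iff_integrableOn_Icc_of_le hR0).mp
        (intervalIntegral.intervalIntegrable_rpow' hr)
    exact h1.congr_fun (fun x hx => by rw [abs_of_nonneg hx.1]) measurableSet_Icc
  have hsub : Icc c d ⊆ Icc (-R) 0 ∪ Icc 0 R := by
    intro x hx
    rcases le_total x 0 with h | h
    · left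
      exact ⟨by have := neg_abs_le c; have := hx.1; simp only [hR]; nlinarith [abs_nonneg d], h⟩
    · right
      exact ⟨h, by have := le_abs_self d; have := hx.2; simp only [hR]; nlinarith [abs_nonneg c]⟩
  refine IntegrableOn.mono_set ?_ hsub
  rw [integrableOn_union]
  constructor
  · have hiff := (Measure.measurePreserving_neg (volume : Measure ℝ)).integrableOn_comp_preimage
      (Homeomorph.neg ℝ).measurableEmbedding (f := fun v : ℝ => |v| ^ r) (s := Icc (-R) 0)
    apply hiff.mp
    have hpre : (Neg.neg ⁻¹' Icc (-R) (0:ℝ)) = Icc 0 R := by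
      ext x
      simp only [mem_preimage, mem_Icc]
      constructor
      · rintro ⟨h1, h2⟩; exact ⟨by linarith, by linarith⟩
      · rintro ⟨h1, h2⟩; exact ⟨by linarith, by linarith⟩
    rw [hpre]
    exact hpos.congr_fun (fun x hx => by
      simp only [Function.comp_apply, abs_neg]) measurableSet_Icc
  · exact hpos

lemma aux_integrableOn_shift {r : ℝ} (hr : -1 < r) (t c d : ℝ) :
    IntegrableOn (fun u : ℝ => |t + u| ^ r) (Icc c d) := by
  have hiff := (measurePreserving_add_right (volume : Measure ℝ) t).integrableOn_comp_preimage
      (Homeomorph.addRight t).measurableEmbedding (f := fun v : ℝ => |v| ^ r)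
      (s := Icc (c + t) (d + t))
  have h2 := hiff.mpr (aux_integrableOn_abs_rpow hr _ _)
  have hpre : ((fun x : ℝ => x + t) ⁻¹' Icc (c + t) (d + t)) = Icc c d := by
    rw [preimage_add_const_Icc]; simp
  rw [hpre] at h2
  exact h2.congr_fun (fun x hx => by
    simp only [Function.comp_apply]; rw [add_comm]) measurableSet_Icc

theorem stmt19 (α κ t : ℝ) (hα0 : 0 < α) (hα2 : α < 2)
    (h1 : -1 < α * κ) (h2 : κ < 1 - 1 / α) (ht : t ≠ 0) :
    ∫⁻ u in Set.Ioi (0:ℝ),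
      ENNReal.ofReal (u ^ (κ * α) * |Real.log |t + u| - Real.log u| ^ α) < ⊤ := by
  set F : ℝ → ℝ≥0∞ :=
    fun u => ENNReal.ofReal (u ^ (κ * α) * |Real.log |t + u| - Real.log u| ^ α) with hF
  set s : ℝ := |t| with hs_def
  have hs : 0 < s := abs_pos.mpr ht
  set ε : ℝ := (α * κ + 1) / (2 * α) with hε_def
  have hεnum : 0 < α * κ + 1 := by linarith
  have hε : 0 < ε := by positivity
  have hεα : ε * α = (α * κ + 1) / 2 := by
    rw [hε_def]; field_simp
  have hκα : α * κ < α - 1 := by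
    have h := mul_lt_mul_of_pos_left h2 hα0
    rw [mul_sub, mul_one, mul_one_div, div_self hα0.ne'] at h
    linarith
  have hcomm : κ * α = α * κ := mul_comm κ α
  have hp1 : ε * α < 1 := by rw [hεα]; linarith
  have hp0 : 0 < ε * α := by positivity
  have hr1 : -1 < κ * α - ε * α := by rw [hεα, hcomm]; linarith
  have hr3 : κ * α - α < -1 := by rw [hcomm]; linarith
  -- Region 1 : (0, s/2)
  have hreg1 : ∫⁻ u in Ioo (0:ℝ) (s/2), F u < ⊤ := by
    set M : ℝ := ((3*s/2) ^ ε + (s/2) ^ (-ε)) / ε with hM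
    have hM0 : 0 ≤ M := by positivity
    set C : ℝ := M * (s/2) ^ ε + ((s/2) ^ (2*ε) + 1) / ε with hC
    have hC0 : 0 ≤ C := by positivity
    have hbound : ∀ u ∈ Ioo (0:ℝ) (s/2),
        F u ≤ ENNReal.ofReal (C ^ α * u ^ (κ * α - ε * α)) := by
      intro u hu
      obtain ⟨hu0, hu2⟩ := hu
      apply ENNReal.ofReal_le_ofReal
      have hwge : s/2 ≤ |t + u| := by
        have h := abs_sub_abs_le_abs_sub t (-u)
        rw [abs_neg, sub_neg_eq_add] at h
        rw [abs_of_pos hu0] at h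
        linarith [h]
      have hwle : |t + u| ≤ 3*s/2 := by
        have h := abs_add_le t u
        rw [abs_of_pos hu0] at h
        linarith
      -- |log |t+u|| ≤ M
      have hlw : |Real.log (|t + u|)| ≤ M := by
        refine (aux_abs_log_le hε (abs_nonneg _)).trans ?_
        rw [hM]
        apply div_le_div_of_nonneg_right ?_ hε.le
        have e1 : |t + u| ^ ε ≤ (3*s/2) ^ ε :=
          Real.rpow_le_rpow (abs_nonneg _) hwle hε.le
        have e2 : |t + u| ^ (-ε) ≤ (s/2) ^ (-ε) :=
          Real.rpow_le_rpow_of_nonpos (by positivity) hwge (by linarith)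
        linarith
      -- |log u| ≤ (((s/2)^(2ε)+1)/ε) * u^(-ε)
      have hune : 0 ≤ u ^ (-ε) := Real.rpow_nonneg hu0.le _
      have hlu : |Real.log u| ≤ (((s/2) ^ (2*ε) + 1) / ε) * u ^ (-ε) := by
        refine (aux_abs_log_le hε hu0.le).trans ?_
        have h3 : u ^ ε = u ^ (2*ε) * u ^ (-ε) := by
          rw [← Real.rpow_add hu0]; ring_nf
        have h2' : u ^ (2*ε) ≤ (s/2) ^ (2*ε) :=
          Real.rpow_le_rpow hu0.le hu2.le (by positivity)
        have h1' : u ^ ε ≤ (s/2) ^ (2*ε) * u ^ (-ε) := by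
          rw [h3]; exact mul_le_mul_of_nonneg_right h2' hune
        calc (u ^ ε + u ^ (-ε)) / ε ≤ (((s/2) ^ (2*ε) + 1) * u ^ (-ε)) / ε := by
              apply div_le_div_of_nonneg_right ?_ hε.le; nlinarith
          _ = (((s/2) ^ (2*ε) + 1) / ε) * u ^ (-ε) := by ring
      -- M ≤ M * (s/2)^ε * u^(-ε)
      have hone : 1 ≤ (s/2) ^ ε * u ^ (-ε) := by
        have hdiv : (s/2) ^ ε * u ^ (-ε) = ((s/2) / u) ^ ε := by
          rw [Real.div_rpow (by positivity) hu0.le, Real.rpow_neg hu0.le]; ring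
        rw [hdiv]
        calc (1:ℝ) = ((s/2) / u) ^ (0:ℝ) := (Real.rpow_zero _).symm
          _ ≤ ((s/2) / u) ^ ε := by
              apply Real.rpow_le_rpow_of_exponent_le _ hε.le
              rw [le_div_iff₀ hu0]; linarith
      have htotal : |Real.log |t + u| - Real.log u| ≤ C * u ^ (-ε) := by
        have ha : |Real.log |t + u| - Real.log u| ≤ |Real.log (|t + u|)| + |Real.log u| :=
          abs_sub _ _
        have hM2 : |Real.log (|t + u|)| ≤ M * (s/2) ^ ε * u ^ (-ε) := by
          refine hlw.trans ?_
          calc M = M * 1 := (mul_one M).symm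
            _ ≤ M * ((s/2) ^ ε * u ^ (-ε)) := mul_le_mul_of_nonneg_left hone hM0
            _ = M * (s/2) ^ ε * u ^ (-ε) := by ring
        rw [hC]
        calc |Real.log |t + u| - Real.log u| ≤ |Real.log (|t + u|)| + |Real.log u| := ha
          _ ≤ M * (s/2) ^ ε * u ^ (-ε) + (((s/2) ^ (2*ε) + 1) / ε) * u ^ (-ε) := by
              linarith
          _ = (M * (s/2) ^ ε + ((s/2) ^ (2*ε) + 1) / ε) * u ^ (-ε) := by ring
      have hpow : |Real.log |t + u| - Real.log u| ^ α ≤ C ^ α * u ^ (-(ε * α)) := by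
        calc |Real.log |t + u| - Real.log u| ^ α ≤ (C * u ^ (-ε)) ^ α :=
              Real.rpow_le_rpow (abs_nonneg _) htotal hα0.le
          _ = C ^ α * (u ^ (-ε)) ^ α := Real.mul_rpow hC0 hune
          _ = C ^ α * u ^ (-(ε * α)) := by
              rw [← Real.rpow_mul hu0.le, neg_mul]
      calc u ^ (κ * α) * |Real.log |t + u| - Real.log u| ^ α
          ≤ u ^ (κ * α) * (C ^ α * u ^ (-(ε * α))) :=
            mul_le_mul_of_nonneg_left hpow (Real.rpow_nonneg hu0.le _)
        _ = C ^ α * u ^ (κ * α - ε * α) := by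
            rw [sub_eq_add_neg, Real.rpow_add hu0]; ring
    calc ∫⁻ u in Ioo (0:ℝ) (s/2), F u
        ≤ ∫⁻ u in Ioo (0:ℝ) (s/2), ENNReal.ofReal (C ^ α * u ^ (κ * α - ε * α)) :=
          setLIntegral_mono' measurableSet_Ioo hbound
      _ < ⊤ := (((intervalIntegral.integrableOn_Ioo_rpow_iff (by positivity : (0:ℝ) < s/2)).2 hr1).const_mul
          (C ^ α)).lintegral_lt_top
  -- Region 3 : (2s, ∞)
  have hreg3 : ∫⁻ u in Ioi (2*s), F u < ⊤ := by
    have hbound : ∀ u ∈ Ioi (2*s),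
        F u ≤ ENNReal.ofReal ((2*s) ^ α * u ^ (κ * α - α)) := by
      intro u hu
      rw [mem_Ioi] at hu
      have hu0 : 0 < u := lt_trans (by linarith) hu
      have hwge : u - s ≤ |t + u| := by
        have h := abs_sub_abs_le_abs_sub u (-t)
        rw [abs_neg, sub_neg_eq_add] at h
        rw [abs_of_pos hu0] at h
        have : |u + t| = |t + u| := by rw [add_comm]
        rw [this] at h
        linarith
      have htu : 0 < |t + u| := by linarith
      apply ENNReal.ofReal_le_ofReal
      have hlogd : Real.log |t + u| - Real.log u = Real.log (|t + u| / u) :=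
        (Real.log_div htu.ne' hu0.ne').symm
      have hx2 : 1/2 ≤ |t + u| / u := by
        rw [le_div_iff₀ hu0]; linarith
      have hxd : |(|t + u| / u - 1)| ≤ s / u := by
        have hnum : |(|t + u| - u)| ≤ s := by
          have h := abs_abs_sub_abs_le_abs_sub (t + u) u
          have h2' : |t + u - u| = s := by
            simp only [add_sub_cancel_right, hs_def]
          rw [h2', abs_of_pos hu0] at h
          exact h
        have : |t + u| / u - 1 = (|t + u| - u) / u := by
          field_simp
        rw [this, abs_div, abs_of_pos hu0]
        exact div_le_div_of_nonneg_right hnum hu0.le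
      have hlog2 : |Real.log |t + u| - Real.log u| ≤ 2 * s / u := by
        rw [hlogd]
        refine (aux_abs_log_le_two_mul hx2).trans ?_
        calc 2 * |(|t + u| / u - 1)| ≤ 2 * (s / u) := by linarith
          _ = 2 * s / u := by ring
      have hpow : |Real.log |t + u| - Real.log u| ^ α ≤ (2*s) ^ α * u ^ (-α) := by
        calc |Real.log |t + u| - Real.log u| ^ α ≤ (2 * s / u) ^ α :=
              Real.rpow_le_rpow (abs_nonneg _) hlog2 hα0.le
          _ = (2*s) ^ α * u ^ (-α) := by
              rw [Real.div_rpow (by positivity) hu0.le, Real.rpow_neg hu0.le, div_eq_mul_inv]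
      calc u ^ (κ * α) * |Real.log |t + u| - Real.log u| ^ α
          ≤ u ^ (κ * α) * ((2*s) ^ α * u ^ (-α)) :=
            mul_le_mul_of_nonneg_left hpow (Real.rpow_nonneg hu0.le _)
        _ = (2*s) ^ α * u ^ (κ * α - α) := by
            rw [sub_eq_add_neg, Real.rpow_add hu0]; ring
    calc ∫⁻ u in Ioi (2*s), F u
        ≤ ∫⁻ u in Ioi (2*s), ENNReal.ofReal ((2*s) ^ α * u ^ (κ * α - α)) :=
          setLIntegral_mono' measurableSet_Ioi hbound
      _ < ⊤ := ((integrableOn_Ioi_rpow_of_lt hr3 (by positivity)).const_mul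
          ((2*s) ^ α)).lintegral_lt_top
  -- Region 2 : [s/2, 2s]
  have hreg2 : ∫⁻ u in Icc (s/2) (2*s), F u < ⊤ := by
    set L : ℝ := ((2*s) ^ ε + (s/2) ^ (-ε)) / ε with hL
    set A : ℝ := L + (3*s) ^ ε / ε with hA
    have hL0 : 0 ≤ L := by positivity
    have hA0 : 0 ≤ A := by positivity
    set K : ℝ := max ((s/2) ^ (κ * α)) ((2*s) ^ (κ * α)) with hK
    have hK0 : 0 ≤ K := le_max_of_le_left (Real.rpow_nonneg (by positivity) _)
    set D : ℝ := K * (2 ^ α * A ^ α) with hD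
    set E : ℝ := K * 2 ^ α * (ε ^ α)⁻¹ with hE
    have hbound : ∀ u ∈ Icc (s/2) (2*s),
        F u ≤ ENNReal.ofReal D + ENNReal.ofReal (E * |t + u| ^ (-(ε * α))) := by
      intro u hu
      obtain ⟨hu1, hu2⟩ := hu
      have hu0 : 0 < u := by linarith
      have hwle : |t + u| ≤ 3*s := by
        have h := abs_add_le t u
        rw [abs_of_pos hu0] at h
        linarith
      have hlu : |Real.log u| ≤ L := by
        refine (aux_abs_log_le hε hu0.le).trans ?_
        rw [hL]
        apply div_le_div_of_nonneg_right ?_ hε.le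
        have e1 : u ^ ε ≤ (2*s) ^ ε := Real.rpow_le_rpow hu0.le hu2 hε.le
        have e2 : u ^ (-ε) ≤ (s/2) ^ (-ε) :=
          Real.rpow_le_rpow_of_nonpos (by positivity) hu1 (by linarith)
        linarith
      have hlw : |Real.log (|t + u|)| ≤ (3*s) ^ ε / ε + |t + u| ^ (-ε) / ε := by
        refine (aux_abs_log_le hε (abs_nonneg _)).trans ?_
        rw [add_div]
        have e1 : |t + u| ^ ε ≤ (3*s) ^ ε :=
          Real.rpow_le_rpow (abs_nonneg _) hwle hε.le
        have e2 : |t + u| ^ ε / ε ≤ (3*s) ^ ε / ε := div_le_div_of_nonneg_right e1 hε.le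
        linarith
      have hs1 : |Real.log |t + u| - Real.log u| ≤ A + |t + u| ^ (-ε) / ε := by
        have ha := abs_sub (Real.log |t + u|) (Real.log u)
        rw [hA]; linarith
      have hwne : 0 ≤ |t + u| ^ (-ε) / ε := by positivity
      have hpow : |Real.log |t + u| - Real.log u| ^ α
          ≤ 2 ^ α * (A ^ α + (|t + u| ^ (-ε) / ε) ^ α) :=
        (Real.rpow_le_rpow (abs_nonneg _) hs1 hα0.le).trans
          (aux_add_rpow_le hA0 hwne hα0.le)
      have hKu : u ^ (κ * α) ≤ K := by
        rcases le_or_gt 0 (κ * α) with h | h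
        · exact le_max_of_le_right (Real.rpow_le_rpow hu0.le hu2 h)
        · exact le_max_of_le_left (Real.rpow_le_rpow_of_nonpos (by positivity) hu1 h.le)
      have hwid : (|t + u| ^ (-ε) / ε) ^ α = |t + u| ^ (-(ε * α)) * (ε ^ α)⁻¹ := by
        rw [div_eq_mul_inv,
          Real.mul_rpow (Real.rpow_nonneg (abs_nonneg _) _) (inv_nonneg.mpr hε.le),
          ← Real.rpow_mul (abs_nonneg _), Real.inv_rpow hε.le, neg_mul]
      have h5 : u ^ (κ * α) * |Real.log |t + u| - Real.log u| ^ α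
          ≤ K * (2 ^ α * (A ^ α + (|t + u| ^ (-ε) / ε) ^ α)) :=
        mul_le_mul hKu hpow (Real.rpow_nonneg (abs_nonneg _) α) hK0
      have h6 : K * (2 ^ α * (A ^ α + (|t + u| ^ (-ε) / ε) ^ α))
          = D + E * |t + u| ^ (-(ε * α)) := by
        rw [hwid, hD, hE]; ring
      calc F u ≤ ENNReal.ofReal (D + E * |t + u| ^ (-(ε * α))) := by
            apply ENNReal.ofReal_le_ofReal
            rw [← h6]; exact h5
        _ ≤ ENNReal.ofReal D + ENNReal.ofReal (E * |t + u| ^ (-(ε * α))) :=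
            ENNReal.ofReal_add_le
    have hstep : ∫⁻ u in Icc (s/2) (2*s), F u
        ≤ ∫⁻ u in Icc (s/2) (2*s),
            (ENNReal.ofReal D + ENNReal.ofReal (E * |t + u| ^ (-(ε * α)))) :=
      setLIntegral_mono' measurableSet_Icc hbound
    refine lt_of_le_of_lt hstep ?_
    rw [lintegral_add_left measurable_const]
    apply ENNReal.add_lt_top.mpr
    constructor
    · rw [setLIntegral_const]
      apply ENNReal.mul_lt_top ENNReal.ofReal_lt_top
      rw [Real.volume_Icc]
      exact ENNReal.ofReal_lt_top
    · exact ((aux_integrableOn_shift (by linarith : (-1:ℝ) < -(ε * α)) t (s/2)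
        (2*s)).const_mul E).lintegral_lt_top
  -- combine
  have hsplit : ∫⁻ u in Ioi (0:ℝ), F u ≤
      (∫⁻ u in Ioo (0:ℝ) (s/2), F u) +
        ((∫⁻ u in Icc (s/2) (2*s), F u) + (∫⁻ u in Ioi (2*s), F u)) := by
    calc ∫⁻ u in Ioi (0:ℝ), F u
        ≤ ∫⁻ u in (Ioo (0:ℝ) (s/2)) ∪ (Icc (s/2) (2*s) ∪ Ioi (2*s)), F u := by
          apply lintegral_mono_set
          intro u hu
          rw [mem_Ioi] at hu
          by_cases h : u < s/2
          · exact Or.inl ⟨hu, h⟩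
          · rcases le_or_gt u (2*s) with h' | h'
            · exact Or.inr (Or.inl ⟨le_of_not_gt h, h'⟩)
            · exact Or.inr (Or.inr h')
      _ ≤ (∫⁻ u in Ioo (0:ℝ) (s/2), F u) +
            ∫⁻ u in (Icc (s/2) (2*s) ∪ Ioi (2*s)), F u := lintegral_union_le _ _ _
      _ ≤ (∫⁻ u in Ioo (0:ℝ) (s/2), F u) +
            ((∫⁻ u in Icc (s/2) (2*s), F u) + (∫⁻ u in Ioi (2*s), F u)) :=
          add_le_add le_rfl (lintegral_union_le _ _ _)
  exact lt_of_le_of_lt hsplit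
    (ENNReal.add_lt_top.mpr ⟨hreg1, ENNReal.add_lt_top.mpr ⟨hreg2, hreg3⟩⟩)
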